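/- Let A be an n×n invertible symmetric real matrix, J a p×p symmetric real matrix with J·J = I_p, and ρ > 0. For any n×p real matrix X with XᵀAX = J, set Q_X := I_n − X J Xᵀ A and Π_X := I_n − X (XᵀX)⁻¹ Xᵀ. Then the matrix G²_X := ρ⁻¹·A X Xᵀ A + Π_X is invertible with inverse (G²_X)⁻¹ = ρ·X Xᵀ + Q_X·Q_Xᵀ; that is, (ρ⁻¹·A X Xᵀ A + Π_X)·(ρ·X Xᵀ + Q_X·Q_Xᵀ) = I_n. -/

import Mathlib

open Matrix

/-- For `X` on the indefinite Stiefel manifold, `G²_X = ρ⁻¹·AXXᵀA + Pi_X` is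
invertible with inverse `ρ·XXᵀ + Q_X·Q_Xᵀ`. -/
theorem G2_inverse
    (n p : ℕ) (hpn : p ≤ n)
    (A : Matrix (Fin n) (Fin n) ℝ) (hA : Aᵀ = A) (hAinv : IsUnit A)
    (J : Matrix (Fin p) (Fin p) ℝ) (hJ : Jᵀ = J) (hJ2 : J * J = 1)
    (ρ : ℝ) (hρ : 0 < ρ)
    (X : Matrix (Fin n) (Fin p) ℝ) (hX : Xᵀ * A * X = J)
    (Q : Matrix (Fin n) (Fin n) ℝ) (hQ : Q = 1 - X * J * Xᵀ * A)
    (Pi : Matrix (Fin n) (Fin n) ℝ) (hPi : Pi = 1 - X * (Xᵀ * X)⁻¹ * Xᵀ) :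
    IsUnit (ρ⁻¹ • (A * X * Xᵀ * A) + Pi) ∧
      (ρ⁻¹ • (A * X * Xᵀ * A) + Pi)⁻¹ = ρ • (X * Xᵀ) + Q * Qᵀ ∧
      (ρ⁻¹ • (A * X * Xᵀ * A) + Pi) * (ρ • (X * Xᵀ) + Q * Qᵀ) = 1 := by
  have hJu : IsUnit J := by
    apply (Matrix.isUnit_iff_isUnit_det J).2
    exact IsUnit.of_mul_eq_one J.det (by rw [← Matrix.det_mul, hJ2, Matrix.det_one])
  -- kernel of X is trivial
  have hXker : ∀ v : Fin p → ℝ, X *ᵥ v = 0 → v = 0 := by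
    intro v hv
    have hJv : J *ᵥ v = 0 := by
      rw [← hX, ← Matrix.mulVec_mulVec, hv, Matrix.mulVec_zero]
    have hinj := Matrix.mulVec_injective_iff_isUnit.2 hJu
    have h0 : J *ᵥ v = J *ᵥ 0 := by simpa using hJv
    exact hinj h0
  -- `Xᵀ * X` is invertible
  have hBu : IsUnit (Xᵀ * X) := by
    rw [← Matrix.mulVec_injective_iff_isUnit]
    intro u w huw
    have h0 : (Xᵀ * X) *ᵥ (u - w) = 0 := by
      rw [Matrix.mulVec_sub, huw, sub_self]
    have h1 : (X *ᵥ (u - w)) ⬝ᵥ (X *ᵥ (u - w)) = 0 := by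
      have hd : (u - w) ⬝ᵥ ((Xᵀ * X) *ᵥ (u - w)) = 0 := by
        rw [h0, dotProduct_zero]
      rwa [← Matrix.mulVec_mulVec, Matrix.dotProduct_mulVec,
        Matrix.vecMul_transpose] at hd
    have h2 : u - w = 0 := hXker _ (dotProduct_self_eq_zero.mp h1)
    exact sub_eq_zero.mp h2
  have hB : (Xᵀ * X)⁻¹ * (Xᵀ * X) = 1 := Matrix.nonsing_inv_mul _ ((Matrix.isUnit_iff_isUnit_det _).1 hBu)
  have hρρ : ρ⁻¹ * ρ = 1 := inv_mul_cancel₀ (ne_of_gt hρ)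
  have hρρ' : ρ * ρ⁻¹ = 1 := mul_inv_cancel₀ (ne_of_gt hρ)
  -- transpose of Q
  have hQt : Qᵀ = 1 - A * X * J * Xᵀ := by
    rw [hQ]
    simp [Matrix.transpose_sub, Matrix.transpose_mul, hA, hJ, Matrix.mul_assoc]
  -- universally-quantified rewriting lemmas (right-associated forms)
  have k1 : ∀ (B : Matrix (Fin p) (Fin n) ℝ), Xᵀ * (A * (X * B)) = J * B := by
    intro B
    rw [← Matrix.mul_assoc, ← Matrix.mul_assoc, hX]
  have k1p : ∀ (B : Matrix (Fin p) (Fin p) ℝ), Xᵀ * (A * (X * B)) = J * B := by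
    intro B
    rw [← Matrix.mul_assoc, ← Matrix.mul_assoc, hX]
  have k1' : Xᵀ * (A * X) = J := by rw [← Matrix.mul_assoc, hX]
  have k2 : ∀ (B : Matrix (Fin p) (Fin n) ℝ), J * (J * B) = B := by
    intro B
    rw [← Matrix.mul_assoc, hJ2, Matrix.one_mul]
  have k2p : ∀ (B : Matrix (Fin p) (Fin p) ℝ), J * (J * B) = B := by
    intro B
    rw [← Matrix.mul_assoc, hJ2, Matrix.one_mul]
  have k3 : ∀ (B : Matrix (Fin p) (Fin n) ℝ), (Xᵀ * X)⁻¹ * (Xᵀ * (X * B)) = B := by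
    intro B
    rw [show Xᵀ * (X * B) = (Xᵀ * X) * B from (Matrix.mul_assoc _ _ _).symm,
      ← Matrix.mul_assoc, hB, Matrix.one_mul]
  have k3p : ∀ (B : Matrix (Fin p) (Fin p) ℝ), (Xᵀ * X)⁻¹ * (Xᵀ * (X * B)) = B := by
    intro B
    rw [show Xᵀ * (X * B) = (Xᵀ * X) * B from (Matrix.mul_assoc _ _ _).symm,
      ← Matrix.mul_assoc, hB, Matrix.one_mul]
  -- the main product
  have hmul : (ρ⁻¹ • (A * X * Xᵀ * A) + Pi) * (ρ • (X * Xᵀ) + Q * Qᵀ) = 1 := by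
    rw [hQt, hQ, hPi]
    simp only [Matrix.mul_sub, Matrix.sub_mul, Matrix.mul_add, Matrix.add_mul,
      Matrix.mul_one, Matrix.one_mul, Matrix.smul_mul, Matrix.mul_smul,
      smul_smul, smul_sub, smul_add, Matrix.mul_assoc, hρρ, hρρ', one_smul,
      k1, k1p, k1', k2, k2p, hJ2, k3, k3p, hB, Matrix.mul_one]
    abel
  refine ⟨?_, Matrix.inv_eq_right_inv hmul, hmul⟩
  have hdet : IsUnit (ρ⁻¹ • (A * X * Xᵀ * A) + Pi).det := by
    apply IsUnit.of_mul_eq_one (ρ • (X * Xᵀ) + Q * Qᵀ).det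
    rw [← Matrix.det_mul, hmul, Matrix.det_one]
  exact (Matrix.isUnit_iff_isUnit_det _).2 hdet
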